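/- Let L be a locally small category with hom-sets in Type u, together with a distinguished object X, such that for every type I : Type u the I-fold power X^I of X exists in L and every object of L is isomorphic to such a power. Let Mod(L) be the full subcategory of the functor category L ⥤ Type u consisting of the functors preserving all small products. Then the evaluation functor Mod(L) → Type u, M ↦ M(X), is monadic: it has a left adjoint, and the comparison functor from Mod(L) to the Eilenberg–Moore category of algebras for the induced monad on Type u is an equivalence of categories. -/

import Mathlib

/-!
STATEMENT 16: For an infinitary Lawvere theory `(L, X)`, the evaluation functor
`Mod(L) ⥤ Type u`, `M ↦ M(X)`, is monadic: it has a left adjoint and the comparison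
functor to the Eilenberg–Moore category of the induced monad on `Type u` is an
equivalence.
-/

open CategoryTheory CategoryTheory.Limits

universe u v

universe v₁ v₂ u₁ u₂

namespace CategoryTheory

namespace Monad2
open Monad

open Limits

noncomputable section

-- Hide the implementation details in this namespace.
namespace MonadicityInternal2

variable {C : Type u₁} {D : Type u₂}
variable [Category.{v₁} C] [Category.{v₂} D]
variable {G : D ⥤ C} {F : C ⥤ D} (adj : F ⊣ G)

/-- The "main pair" for an algebra `(A, α)` is the pair of morphisms `(F α, ε_FA)`. It is always a
reflexive pair, and will be used to construct the left adjoint to the comparison functor and show it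
is an equivalence.
-/
instance main_pair_reflexive (A : adj.toMonad.Algebra) :
    IsReflexivePair (F.map A.a) (adj.counit.app (F.obj A.A)) := by
  apply IsReflexivePair.mk' (F.map (adj.unit.app _)) _ _
  · exact (F.map_comp _ _).symm.trans ((congr_arg F.map A.unit).trans (F.map_id _))
  · exact adj.left_triangle_components A.A

/-- The "main pair" for an algebra `(A, α)` is the pair of morphisms `(F α, ε_FA)`. It is always a
`G`-split pair, and will be used to construct the left adjoint to the comparison functor and show it
is an equivalence.
-/
instance main_pair_G_split (A : adj.toMonad.Algebra) :
    G.IsSplitPair (F.map A.a)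
      (adj.counit.app (F.obj A.A)) where
  splittable := ⟨_, _, ⟨beckSplitCoequalizer A⟩⟩

/-- The object function for the left adjoint to the comparison functor. -/
def comparisonLeftAdjointObj (A : adj.toMonad.Algebra)
    [HasCoequalizer (F.map A.a) (adj.counit.app _)] : D :=
  coequalizer (F.map A.a) (adj.counit.app _)

/-
The new unused variable linter in
https://github.com/leanprover/lean4/pull/5338
flags `{ f : F.obj A.A ⟶ B // _ }`.
-/
set_option linter.unusedVariables false in
/--
We have a bijection of homsets which will be used to construct the left adjoint to the comparison
functor.
-/
@[simps!]
def comparisonLeftAdjointHomEquiv (A : adj.toMonad.Algebra) (B : D)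
    [HasCoequalizer (F.map A.a) (adj.counit.app (F.obj A.A))] :
    (comparisonLeftAdjointObj adj A ⟶ B) ≃ (A ⟶ (comparison adj).obj B) :=
  calc
    (comparisonLeftAdjointObj adj A ⟶ B) ≃ { f : F.obj A.A ⟶ B // _ } :=
      Cofork.IsColimit.homIso (colimit.isColimit _) B
    _ ≃ { g : A.A ⟶ G.obj B // G.map (F.map g) ≫ G.map (adj.counit.app B) = A.a ≫ g } := by
      refine (adj.homEquiv _ _).subtypeEquiv ?_
      intro f
      rw [← (adj.homEquiv _ _).injective.eq_iff, Adjunction.homEquiv_naturality_left,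
        adj.homEquiv_unit, adj.homEquiv_unit]
      erw [G.map_comp]
      dsimp
      erw [adj.right_triangle_components_assoc, ← G.map_comp, F.map_comp, Category.assoc,
        adj.counit_naturality, adj.left_triangle_components_assoc]
      apply eq_comm
    _ ≃ (A ⟶ (comparison adj).obj B) :=
      { toFun := fun g =>
          { f := _
            h := g.prop }
        invFun := fun f => ⟨f.f, f.h⟩
        left_inv := fun g => by ext; rfl
        right_inv := fun f => by ext; rfl }

/-- Construct the adjunction to the comparison functor.
-/
def leftAdjointComparison
    [∀ A : adj.toMonad.Algebra, HasCoequalizer (F.map A.a)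
      (adj.counit.app (F.obj A.A))] :
    adj.toMonad.Algebra ⥤ D := by
  refine
    Adjunction.leftAdjointOfEquiv (G := comparison adj)
      (F_obj := fun A => comparisonLeftAdjointObj adj A) (fun A B => ?_) ?_
  · apply comparisonLeftAdjointHomEquiv
  · intro A B B' g h
    ext1
    -- Porting note: the goal was previously closed by the following, which succeeds until
    -- `Category.assoc`.
    -- dsimp [comparisonLeftAdjointHomEquiv]
    -- rw [← adj.homEquiv_naturality_right, Category.assoc]
    exact (congrArg (adj.homEquiv _ _) (Category.assoc _ _ _).symm).trans
      (adj.homEquiv_naturality_right _ _)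

/-- Provided we have the appropriate coequalizers, we have an adjunction to the comparison functor.
-/
@[simps! counit]
def comparisonAdjunction
    [∀ A : adj.toMonad.Algebra, HasCoequalizer (F.map A.a)
      (adj.counit.app (F.obj A.A))] :
    leftAdjointComparison adj ⊣ comparison adj :=
  Adjunction.adjunctionOfEquivLeft _ _

variable {adj}

theorem comparisonAdjunction_unit_f_aux
    [∀ A : adj.toMonad.Algebra, HasCoequalizer (F.map A.a)
      (adj.counit.app (F.obj A.A))]
    (A : adj.toMonad.Algebra) :
    ((comparisonAdjunction adj).unit.app A).f =
      adj.homEquiv A.A _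
        (coequalizer.π (F.map A.a) (adj.counit.app (F.obj A.A))) :=
  congr_arg (adj.homEquiv _ _) (Category.comp_id _)

/-- This is a cofork which is helpful for establishing monadicity: the morphism from the Beck
coequalizer to this cofork is the unit for the adjunction on the comparison functor.
-/
@[simps! pt]
def unitCofork (A : adj.toMonad.Algebra)
    [HasCoequalizer (F.map A.a) (adj.counit.app (F.obj A.A))] :
    Cofork (G.map (F.map A.a)) (G.map (adj.counit.app (F.obj A.A))) :=
  Cofork.ofπ (G.map (coequalizer.π (F.map A.a) (adj.counit.app (F.obj A.A))))
    (by
      change _ = G.map _ ≫ _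
      exact (G.map_comp _ _).symm.trans ((congr_arg G.map (coequalizer.condition (F.map A.a) (adj.counit.app (F.obj A.A)))).trans (G.map_comp _ _)))

@[simp]
theorem unitCofork_π (A : adj.toMonad.Algebra)
    [HasCoequalizer (F.map A.a) (adj.counit.app (F.obj A.A))] :
    (unitCofork A).π = G.map (coequalizer.π (F.map A.a) (adj.counit.app (F.obj A.A))) :=
  rfl

theorem comparisonAdjunction_unit_f
    [∀ A : adj.toMonad.Algebra, HasCoequalizer (F.map A.a)
      (adj.counit.app (F.obj A.A))]
    (A : adj.toMonad.Algebra) :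
    ((comparisonAdjunction adj).unit.app A).f = (beckCoequalizer A).desc (unitCofork A) := by
  apply Limits.Cofork.IsColimit.hom_ext (beckCoequalizer A)
  erw [Cofork.IsColimit.π_desc]
  dsimp only [beckCofork_π, unitCofork_π]
  erw [comparisonAdjunction_unit_f_aux, ← adj.homEquiv_naturality_left A.a, coequalizer.condition,
    adj.homEquiv_naturality_right, adj.homEquiv_unit, Category.assoc]
  apply adj.right_triangle_components_assoc

variable (adj)

/-- The cofork which describes the counit of the adjunction: the morphism from the coequalizer of
this pair to this morphism is the counit.
-/
@[simps!]
def counitCofork (B : D) :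
    Cofork (F.map (G.map (adj.counit.app B)))
      (adj.counit.app (F.obj (G.obj B))) :=
  Cofork.ofπ (adj.counit.app B) (adj.counit_naturality _)

variable {adj} in
/-- The unit cofork is a colimit provided `G` preserves it. -/
def unitColimitOfPreservesCoequalizer (A : adj.toMonad.Algebra)
    [HasCoequalizer (F.map A.a) (adj.counit.app (F.obj A.A))]
    [PreservesColimit (parallelPair (F.map A.a) (adj.counit.app (F.obj A.A))) G] :
    IsColimit (unitCofork (G := G) A) :=
  isColimitOfHasCoequalizerOfPreservesColimit G _ _

/-- The counit cofork is a colimit provided `G` reflects it. -/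
def counitCoequalizerOfReflectsCoequalizer (B : D)
    [ReflectsColimit (parallelPair (F.map (G.map (adj.counit.app B)))
      (adj.counit.app (F.obj (G.obj B)))) G] :
    IsColimit (counitCofork (adj := adj) B) :=
  isColimitOfIsColimitCoforkMap G _ (beckCoequalizer ((comparison adj).obj B))

-- Porting note: Lean 3 didn't seem to need this
instance
    [∀ A : adj.toMonad.Algebra, HasCoequalizer (F.map A.a) (adj.counit.app (F.obj A.A))]
    (B : D) : HasColimit (parallelPair
      (F.map (G.map (NatTrans.app adj.counit B)))
      (NatTrans.app adj.counit (F.obj (G.obj B)))) :=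
  inferInstanceAs <| HasCoequalizer
    (F.map ((comparison adj).obj B).a)
    (adj.counit.app (F.obj ((comparison adj).obj B).A))

theorem comparisonAdjunction_counit_app
    [∀ A : adj.toMonad.Algebra, HasCoequalizer (F.map A.a) (adj.counit.app (F.obj A.A))] (B : D) :
    (comparisonAdjunction adj).counit.app B = colimit.desc _ (counitCofork adj B) := by
  apply coequalizer.hom_ext
  refine (Cofork.IsColimit.desc' _ _ _).2.trans ?_
  erw [colimit.ι_desc]
  exact (adj.homEquiv_counit _ _ _).trans
    ((congrArg (fun k => k ≫ adj.counit.app B) (F.map_id _)).trans (Category.id_comp _))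

end MonadicityInternal2

open CategoryTheory Adjunction Monad MonadicityInternal2

variable {C : Type u₁} {D : Type u₂}
variable [Category.{v₁} C] [Category.{v₂} D]
variable {G : D ⥤ C} {F : C ⥤ D} (adj : F ⊣ G)

section BeckMonadicity

-- Porting note: added these to replace parametric instances https://github.com/leanprover/lean4/issues/2311
-- When this is fixed the proofs below that struggle with instances should be reviewed.
-- [∀ ⦃A B⦄ (f g : A ⟶ B) [G.IsSplitPair f g], HasCoequalizer f g]
class HasCoequalizerOfIsSplitPair (G : D ⥤ C) : Prop where
  out : ∀ {A B} (f g : A ⟶ B) [G.IsSplitPair f g], HasCoequalizer f g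

-- Porting note: cannot find synth order
-- instance {A B} (f g : A ⟶ B) [G.IsSplitPair f g] [HasCoequalizerOfIsSplitPair G] :
--     HasCoequalizer f g := HasCoequalizerOfIsSplitPair.out f g

instance [HasCoequalizerOfIsSplitPair G] : ∀ (A : Algebra adj.toMonad),
    HasCoequalizer (F.map A.a)
      (adj.counit.app (F.obj A.A)) :=
  fun _ => HasCoequalizerOfIsSplitPair.out G _ _

-- Porting note: added these to replace parametric instances https://github.com/leanprover/lean4/issues/2311
-- [∀ ⦃A B⦄ (f g : A ⟶ B) [G.IsSplitPair f g], PreservesColimit (parallelPair f g) G]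
class PreservesColimitOfIsSplitPair (G : D ⥤ C) where
  out : ∀ {A B} (f g : A ⟶ B) [G.IsSplitPair f g], PreservesColimit (parallelPair f g) G

instance {A B} (f g : A ⟶ B) [G.IsSplitPair f g] [PreservesColimitOfIsSplitPair G] :
    PreservesColimit (parallelPair f g) G := PreservesColimitOfIsSplitPair.out f g

instance [PreservesColimitOfIsSplitPair G] : ∀ (A : Algebra adj.toMonad),
   PreservesColimit (parallelPair (F.map A.a)
      (NatTrans.app adj.counit (F.obj A.A))) G :=
  fun _ => PreservesColimitOfIsSplitPair.out _ _

-- Porting note: added these to replace parametric instances https://github.com/leanprover/lean4/issues/2311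
-- [∀ ⦃A B⦄ (f g : A ⟶ B) [G.IsSplitPair f g], ReflectsColimit (parallelPair f g) G] :
class ReflectsColimitOfIsSplitPair (G : D ⥤ C) where
  out : ∀ {A B} (f g : A ⟶ B) [G.IsSplitPair f g], ReflectsColimit (parallelPair f g) G

instance {A B} (f g : A ⟶ B) [G.IsSplitPair f g] [ReflectsColimitOfIsSplitPair G] :
    ReflectsColimit (parallelPair f g) G := ReflectsColimitOfIsSplitPair.out f g

instance [ReflectsColimitOfIsSplitPair G] : ∀ (A : Algebra adj.toMonad),
    ReflectsColimit (parallelPair (F.map A.a)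
      (NatTrans.app adj.counit (F.obj A.A))) G :=
  fun _ => ReflectsColimitOfIsSplitPair.out _ _

/-- To show `G` is a monadic right adjoint, we can show it preserves and reflects `G`-split
coequalizers, and `D` has them.
-/
def monadicOfHasPreservesReflectsGSplitCoequalizers [HasCoequalizerOfIsSplitPair G]
    [PreservesColimitOfIsSplitPair G] [ReflectsColimitOfIsSplitPair G] :
    MonadicRightAdjoint G where
  L := F
  adj := adj
  eqv := by
    have : ∀ (X : Algebra adj.toMonad), IsIso ((comparisonAdjunction adj).unit.app X) := by
      intro X
      apply @isIso_of_reflects_iso _ _ _ _ _ _ _ (Monad.forget adj.toMonad) ?_ _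
      · change IsIso ((comparisonAdjunction adj).unit.app X).f
        rw [comparisonAdjunction_unit_f]
        change
          IsIso
            (IsColimit.coconePointUniqueUpToIso (beckCoequalizer X)
                (unitColimitOfPreservesCoequalizer X)).hom
        exact (IsColimit.coconePointUniqueUpToIso _ _).isIso_hom
    have : ∀ (Y : D), IsIso ((comparisonAdjunction adj).counit.app Y) := by
      intro Y
      rw [comparisonAdjunction_counit_app]
      -- Porting note: passing instances through
      change IsIso (IsColimit.coconePointUniqueUpToIso _ ?_).hom
      infer_instance
      -- Porting note: passing instances through
      apply @counitCoequalizerOfReflectsCoequalizer _ _ _ _ _ _ _ _ ?_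
      letI _ :
        G.IsSplitPair (F.map (G.map (adj.counit.app Y)))
          (adj.counit.app (F.obj (G.obj Y))) :=
        MonadicityInternal2.main_pair_G_split _ ((comparison adj).obj Y)
      infer_instance
    exact (comparisonAdjunction adj).toEquivalence.isEquivalence_inverse

-- Porting note: added these to replace parametric instances https://github.com/leanprover/lean4/issues/2311
-- [∀ ⦃A B⦄ (f g : A ⟶ B) [G.IsSplitPair f g], CreatesColimit (parallelPair f g) G] :
class CreatesColimitOfIsSplitPair (G : D ⥤ C) where
  out : ∀ {A B} (f g : A ⟶ B) [G.IsSplitPair f g], CreatesColimit (parallelPair f g) G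

instance {A B} (f g : A ⟶ B) [G.IsSplitPair f g] [CreatesColimitOfIsSplitPair G] :
    CreatesColimit (parallelPair f g) G := CreatesColimitOfIsSplitPair.out f g

instance [CreatesColimitOfIsSplitPair G] : ∀ (A : Algebra adj.toMonad),
    CreatesColimit (parallelPair (F.map A.a)
      (NatTrans.app adj.counit (F.obj A.A))) G :=
  fun _ => CreatesColimitOfIsSplitPair.out _ _

/--
Beck's monadicity theorem. If `G` has a left adjoint and creates coequalizers of `G`-split pairs,
then it is monadic.
This is the converse of `createsGSplitCoequalizersOfMonadic`.
-/
def monadicOfCreatesGSplitCoequalizers [CreatesColimitOfIsSplitPair G] :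
    MonadicRightAdjoint G := by
  let I {A B} (f g : A ⟶ B) [G.IsSplitPair f g] : HasColimit (parallelPair f g ⋙ G) := by
    apply @hasColimit_of_iso _ _ _ _ _ _ ?_ (diagramIsoParallelPair.{v₁} _)
    exact inferInstanceAs <| HasCoequalizer (G.map f) (G.map g)
  have : HasCoequalizerOfIsSplitPair G := ⟨fun _ _ => hasColimit_of_created (parallelPair _ _) G⟩
  have : PreservesColimitOfIsSplitPair G := ⟨by intros; infer_instance⟩
  have : ReflectsColimitOfIsSplitPair G := ⟨by intros; infer_instance⟩
  exact monadicOfHasPreservesReflectsGSplitCoequalizers adj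
end BeckMonadicity

end

end Monad2

end CategoryTheory




namespace Stmt16Aux

section TypeLemmas

theorem bijective_of_isLimit {I : Type u} {D : Discrete I ⥤ Type u} {c : Cone D}
    (hc : IsLimit c) :
    Function.Bijective (fun (x : c.pt) (i : I) => c.π.app ⟨i⟩ x) := by
  constructor
  · intro x y h
    have hx : (TypeCat.ofHom fun _ : PUnit.{u + 1} => x) = TypeCat.ofHom (fun _ => y) := by
      apply hc.hom_ext
      rintro ⟨i⟩
      apply ConcreteCategory.hom_ext
      intro p
      exact congrFun h i
    exact ConcreteCategory.congr_hom hx PUnit.unit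
  · intro v
    let s : Cone D :=
      { pt := PUnit.{u + 1}
        π := Discrete.natTrans (fun j => TypeCat.ofHom fun _ => v j.as) }
    refine ⟨hc.lift s PUnit.unit, ?_⟩
    funext i
    exact ConcreteCategory.congr_hom (hc.fac s ⟨i⟩) PUnit.unit

noncomputable def isLimitOfBijective {I : Type u} {D : Discrete I ⥤ Type u} (c : Cone D)
    (hb : Function.Bijective (fun (x : c.pt) (i : I) => c.π.app ⟨i⟩ x)) : IsLimit c where
  lift s := TypeCat.ofHom fun x => (Equiv.ofBijective _ hb).symm fun i => s.π.app ⟨i⟩ x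
  fac s := by
    rintro ⟨i⟩
    apply ConcreteCategory.hom_ext
    intro x
    exact congrFun ((Equiv.ofBijective _ hb).apply_symm_apply fun i => s.π.app ⟨i⟩ x) i
  uniq s m hm := by
    apply ConcreteCategory.hom_ext
    intro x
    apply hb.injective
    funext i
    exact (ConcreteCategory.congr_hom (hm ⟨i⟩) x).trans
      (congrFun ((Equiv.ofBijective _ hb).apply_symm_apply fun i => s.π.app ⟨i⟩ x) i).symm

end TypeLemmas

section Models

variable {L : Type v} [Category.{u} L]

theorem model_bijective {M : L ⥤ Type u}
    (hM : ∀ I : Type u, Nonempty (PreservesLimitsOfShape (Discrete I) M))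
    {I : Type u} {D : Discrete I ⥤ L} {c : Cone D} (hc : IsLimit c) :
    Function.Bijective (fun (x : M.obj c.pt) (i : I) => M.map (c.π.app ⟨i⟩) x) := by
  have := (hM I).some
  exact bijective_of_isLimit (isLimitOfPreserves M hc)

/-- A cone over a constant-`X` discrete diagram with given point and legs. -/
def fanOfLegs (X : L) {J : Type u} (A : L) (π : J → (A ⟶ X)) :
    Cone (Discrete.functor fun _ : J => X) where
  pt := A
  π := Discrete.natTrans fun j => π j.as

theorem exists_power_fan (X : L)
    (hpow : ∀ I : Type u, HasProduct fun _ : I => X)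
    (hgen : ∀ A : L, ∃ I : Type u,
      letI := hpow I; Nonempty (A ≅ ∏ᶜ fun _ : I => X)) (A : L) :
    ∃ (J : Type u) (π : J → (A ⟶ X)), Nonempty (IsLimit (fanOfLegs X A π)) := by
  obtain ⟨J, ⟨e⟩⟩ := hgen A
  letI := hpow J
  refine ⟨J, fun j => e.hom ≫ limit.π (Discrete.functor fun _ : J => X) ⟨j⟩, ⟨?_⟩⟩
  refine IsLimit.ofIsoLimit (limit.isLimit _) (Cones.ext e.symm ?_)
  rintro ⟨j⟩
  simp [fanOfLegs]

end Models

section Key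

variable {L : Type v} [Category.{u} L]
variable {M N Q : L ⥤ Type u} (f g : M ⟶ N) (q : N ⟶ Q)

theorem key_bijective
    (X : L)
    (hpow : ∀ I : Type u, HasProduct fun _ : I => X)
    (hgen : ∀ A : L, ∃ I : Type u,
      letI := hpow I; Nonempty (A ≅ ∏ᶜ fun _ : I => X))
    (hM : ∀ I : Type u, Nonempty (PreservesLimitsOfShape (Discrete I) M))
    (hN : ∀ I : Type u, Nonempty (PreservesLimitsOfShape (Discrete I) N))
    (t0 : N.obj X → M.obj X)
    (hgt0 : ∀ n, g.app X (t0 n) = n)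
    (hftfg : ∀ m, f.app X (t0 (f.app X m)) = f.app X (t0 (g.app X m)))
    (hq : ∀ (A : L) (m : M.obj A), q.app A (f.app A m) = q.app A (g.app A m))
    (hsurj : ∀ A : L, Function.Surjective (q.app A))
    (hdesc : ∀ (A : L) (Z : Type u) (h : N.obj A → Z),
      (∀ m, h (f.app A m) = h (g.app A m)) →
      ∀ n n', q.app A n = q.app A n' → h n = h n')
    {I : Type u} {D : Discrete I ⥤ L} {c : Cone D} (hc : IsLimit c) :
    Function.Bijective (fun (x : Q.obj c.pt) (i : I) => Q.map (c.π.app ⟨i⟩) x) := by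
  -- transported sections at each object
  have hsec : ∀ A : L, ∃ t : N.obj A → M.obj A,
      (∀ n, g.app A (t n) = n) ∧
      (∀ m, f.app A (t (f.app A m)) = f.app A (t (g.app A m))) := by
    intro A
    obtain ⟨J, π, ⟨hcA⟩⟩ := exists_power_fan X hpow hgen A
    set cA := fanOfLegs X A π with hcAdef
    let eM := Equiv.ofBijective _ (model_bijective hM hcA)
    let eN := Equiv.ofBijective _ (model_bijective hN hcA)
    have hnatf : ∀ (y : M.obj A) (j : J), eN (f.app A y) j = f.app X (eM y j) :=
      fun y j => (NatTrans.naturality_apply f (cA.π.app ⟨j⟩) y).symm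
    have hnatg : ∀ (y : M.obj A) (j : J), eN (g.app A y) j = g.app X (eM y j) :=
      fun y j => (NatTrans.naturality_apply g (cA.π.app ⟨j⟩) y).symm
    refine ⟨fun n => eM.symm fun j => t0 (eN n j), ?_, ?_⟩
    · intro n
      apply eN.injective
      funext j
      erw [hnatg, eM.apply_symm_apply]
      exact hgt0 _
    · intro m
      apply eN.injective
      funext j
      erw [hnatf, hnatf, eM.apply_symm_apply, eM.apply_symm_apply, hnatf, hnatg]
      exact hftfg _
  choose t hgt hff using hsec
  have hnatq : ∀ {A B : L} (u : A ⟶ B) (n : N.obj A),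
      Q.map u (q.app A n) = q.app B (N.map u n) :=
    fun u n => (NatTrans.naturality_apply q u n).symm
  let eMc := Equiv.ofBijective _ (model_bijective hM hc)
  let eNc := Equiv.ofBijective _ (model_bijective hN hc)
  have hnatfc : ∀ (y : M.obj c.pt) (i : I), eNc (f.app c.pt y) i
      = f.app (D.obj ⟨i⟩) (eMc y i) :=
    fun y i => (NatTrans.naturality_apply f (c.π.app ⟨i⟩) y).symm
  have hnatgc : ∀ (y : M.obj c.pt) (i : I), eNc (g.app c.pt y) i
      = g.app (D.obj ⟨i⟩) (eMc y i) :=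
    fun y i => (NatTrans.naturality_apply g (c.π.app ⟨i⟩) y).symm
  constructor
  · intro x y hxy
    obtain ⟨n, rfl⟩ := hsurj c.pt x
    obtain ⟨n', rfl⟩ := hsurj c.pt y
    set tc : N.obj c.pt → M.obj c.pt :=
      fun n => eMc.symm fun i => t (D.obj ⟨i⟩) (eNc n i) with htc
    have hgtc : ∀ n, g.app c.pt (tc n) = n := by
      intro n
      apply eNc.injective
      funext i
      rw [hnatgc, htc, eMc.apply_symm_apply]
      exact hgt _ _
    have hkey : ∀ i : I, f.app (D.obj ⟨i⟩) (t (D.obj ⟨i⟩) (eNc n i))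
        = f.app (D.obj ⟨i⟩) (t (D.obj ⟨i⟩) (eNc n' i)) := by
      intro i
      have hq1 : q.app (D.obj ⟨i⟩) (eNc n i) = q.app (D.obj ⟨i⟩) (eNc n' i) := by
        have e1 := congrFun hxy i
        dsimp at e1
        rw [hnatq, hnatq] at e1
        exact e1
      exact hdesc (D.obj ⟨i⟩) _ (fun nn => f.app _ (t _ nn)) (fun m => hff _ m) _ _ hq1
    have hfeq : f.app c.pt (tc n) = f.app c.pt (tc n') := by
      apply eNc.injective
      funext i
      rw [hnatfc, hnatfc, htc, eMc.apply_symm_apply, eMc.apply_symm_apply]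
      exact hkey i
    calc q.app c.pt n = q.app c.pt (g.app c.pt (tc n)) := by rw [hgtc]
      _ = q.app c.pt (f.app c.pt (tc n)) := (hq _ _).symm
      _ = q.app c.pt (f.app c.pt (tc n')) := by rw [hfeq]
      _ = q.app c.pt (g.app c.pt (tc n')) := hq _ _
      _ = q.app c.pt n' := by rw [hgtc]
  · intro v
    choose n hn using fun i => hsurj (D.obj ⟨i⟩) (v i)
    refine ⟨q.app c.pt (eNc.symm n), ?_⟩
    funext i
    dsimp
    rw [hnatq]
    have : N.map (c.π.app ⟨i⟩) (eNc.symm n) = n i :=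
      congrFun (eNc.apply_symm_apply n) i
    rw [this]
    exact hn i

end Key

end Stmt16Aux


/-- The category of models of an infinitary Lawvere theory: the full subcategory of
`L ⥤ Type u` on the functors preserving all small products. -/
abbrev LawvereModel (L : Type v) [Category.{u} L] : Type (max v (u + 1)) :=
  ObjectProperty.FullSubcategory (C := L ⥤ Type u) fun M : L ⥤ Type u =>
    ∀ I : Type u, Nonempty (PreservesLimitsOfShape (Discrete I) M)

/-- Evaluation of models at the distinguished object `X`. -/
def evalModel (L : Type v) [Category.{u} L] (X : L) : LawvereModel L ⥤ Type u :=
  ObjectProperty.ι _ ⋙ (evaluation L (Type u)).obj X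

namespace Stmt16Aux

section ModelCat

variable {L : Type v} [Category.{u} L]
variable (X : L) (hpow : ∀ I : Type u, HasProduct fun _ : I => X)

/-- Comparison equivalence for a model at a power of `X`. -/
noncomputable def powEquiv (M : LawvereModel L) (I : Type u) :
    letI := hpow I
    M.obj.obj (∏ᶜ fun _ : I => X) ≃ (I → M.obj.obj X) :=
  letI := hpow I
  Equiv.ofBijective _
    (model_bijective M.2 (limit.isLimit (Discrete.functor fun _ : I => X)))

/-- The free model on `I` generators: the functor corepresented by `X^I`. -/
noncomputable def freeObj (I : Type u) : LawvereModel L :=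
  letI := hpow I
  ⟨coyoneda.obj (Opposite.op (∏ᶜ fun _ : I => X)), fun _ => ⟨inferInstance⟩⟩

noncomputable def freeHomEquiv (I : Type u) (M : LawvereModel L) :
    (freeObj X hpow I ⟶ M) ≃ (I ⟶ (evalModel L X).obj M) :=
  ({ toFun := fun h => h.hom, invFun := fun h => ObjectProperty.homMk h,
      left_inv := fun _ => rfl, right_inv := fun _ => rfl } :
      (freeObj X hpow I ⟶ M) ≃ ((freeObj X hpow I).obj ⟶ M.obj)).trans
    ((coyonedaEquiv (F := M.obj)).trans ((powEquiv X hpow M I).trans TypeCat.homEquiv.symm))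

theorem freeHomEquiv_natural (I : Type u) {M M' : LawvereModel L} (α : M ⟶ M')
    (h : freeObj X hpow I ⟶ M) :
    freeHomEquiv X hpow I M' (h ≫ α) =
      freeHomEquiv X hpow I M h ≫ (evalModel L X).map α := by
  ext i
  exact (NatTrans.naturality_apply α.hom _ (h.hom.app _ (𝟙 _))).symm

theorem evalModel_reflectsIsos
    (hgen : ∀ A : L, ∃ I : Type u,
      letI := hpow I; Nonempty (A ≅ ∏ᶜ fun _ : I => X)) :
    (evalModel L X).ReflectsIsomorphisms := by
  constructor
  intro M N α hα
  have hbX : Function.Bijective (α.hom.app X) :=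
    (isIso_iff_bijective ((evalModel L X).map α)).1 hα
  have hcomp : ∀ A : L, IsIso (α.hom.app A) := by
    intro A
    rw [isIso_iff_bijective]
    obtain ⟨J, πl, ⟨hcA⟩⟩ := exists_power_fan X hpow hgen A
    let eM := Equiv.ofBijective _ (model_bijective M.2 hcA)
    let eN := Equiv.ofBijective _ (model_bijective N.2 hcA)
    have hrw : (α.hom.app A : M.obj.obj A → N.obj.obj A)
        = fun x => eN.symm (fun j => α.hom.app X (eM x j)) := by
      funext x
      apply eN.injective
      funext j
      rw [eN.apply_symm_apply]
      exact (NatTrans.naturality_apply α.hom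
        ((fanOfLegs X A πl).π.app ⟨j⟩) x).symm
    rw [hrw]
    exact (eN.symm.bijective.comp
      (Equiv.piCongrRight fun _ => Equiv.ofBijective _ hbX).bijective).comp eM.bijective
  haveI : ∀ A : L, IsIso (α.hom.app A) := hcomp
  haveI : IsIso ((ObjectProperty.ι _).map α) := NatIso.isIso_of_isIso_app α.hom
  exact isIso_of_reflects_iso α (ObjectProperty.ι _)

noncomputable def createsSplit
    (hgen : ∀ A : L, ∃ I : Type u,
      letI := hpow I; Nonempty (A ≅ ∏ᶜ fun _ : I => X))
    {M N : LawvereModel L} (f g : M ⟶ N) [(evalModel L X).IsSplitPair f g] :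
    CreatesColimit (parallelPair f g) (evalModel L X) := by
  haveI : (evalModel L X).ReflectsIsomorphisms := evalModel_reflectsIsos X hpow hgen
  let π := HasSplitCoequalizer.coequalizerπ ((evalModel L X).map f) ((evalModel L X).map g)
  let sc := HasSplitCoequalizer.isSplitCoequalizer
    ((evalModel L X).map f) ((evalModel L X).map g)
  let K' := parallelPair f g ⋙ ObjectProperty.ι _
  let q : N.obj ⟶ colimit K' := colimit.ι K' WalkingParallelPair.one
  have hw : ∀ (A : L) (m : M.obj.obj A),
      q.app A (f.hom.app A m) = q.app A (g.hom.app A m) := by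
    intro A m
    have h1 := colimit.w K' WalkingParallelPairHom.left
    have h2 := colimit.w K' WalkingParallelPairHom.right
    have h3 : K'.map WalkingParallelPairHom.left ≫ colimit.ι K' WalkingParallelPair.one
        = K'.map WalkingParallelPairHom.right ≫ colimit.ι K' WalkingParallelPair.one :=
      h1.trans h2.symm
    exact ConcreteCategory.congr_hom (congrArg (fun (τ : M.obj ⟶ colimit K') => τ.app A) h3) m
  have hev : ∀ A : L,
      IsColimit (((evaluation L (Type u)).obj A).mapCocone (colimit.cocone K')) :=
    fun A => isColimitOfPreserves _ (colimit.isColimit K')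
  have hsurj : ∀ A : L, Function.Surjective (q.app A) := by
    intro A x
    obtain ⟨j, y, hy⟩ := Types.jointly_surjective _ (hev A) x
    cases j with
    | one => exact ⟨y, hy⟩
    | zero =>
      refine ⟨f.hom.app A y, ?_⟩
      have h1 := ConcreteCategory.congr_hom (congrArg (fun (τ : M.obj ⟶ colimit K') => τ.app A)
        (colimit.w K' WalkingParallelPairHom.left)) y
      exact h1.trans hy
  have hdesc : ∀ (A : L) (Z : Type u) (h : N.obj.obj A → Z),
      (∀ m, h (f.hom.app A m) = h (g.hom.app A m)) →
      ∀ n n', q.app A n = q.app A n' → h n = h n' := by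
    intro A Z h hcompat n n' hnn
    let s : Cocone (K' ⋙ (evaluation L (Type u)).obj A) :=
      { pt := Z
        ι :=
          { app := fun j => WalkingParallelPair.casesOn j (TypeCat.ofHom fun m => h (f.hom.app A m))
              (TypeCat.ofHom h)
            naturality := by
              rintro _ _ (_ | _ | _)
              · rfl
              · ext m
                exact (hcompat m).symm
              · simp } }
    have hfac := ConcreteCategory.congr_hom ((hev A).fac s WalkingParallelPair.one)
    calc h n = (hev A).desc s (q.app A n) := (hfac n).symm
      _ = (hev A).desc s (q.app A n') := by rw [hnn]
      _ = h n' := hfac n'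
  have hls : ∀ x, f.hom.app X (sc.leftSection x) = sc.rightSection (π x) :=
    fun x => ConcreteCategory.congr_hom sc.leftSection_top x
  have hcond : ∀ m : M.obj.obj X, π (f.hom.app X m) = π (g.hom.app X m) :=
    fun m => ConcreteCategory.congr_hom sc.condition m
  have hQ : ∀ I : Type u,
      Nonempty (PreservesLimitsOfShape (Discrete I) (colimit K' : L ⥤ Type u)) := by
    intro I
    refine ⟨⟨fun {D} => ⟨fun {c} hc => ⟨isLimitOfBijective _ ?_⟩⟩⟩⟩
    exact key_bijective f.hom g.hom q X hpow hgen M.2 N.2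
      sc.leftSection (fun n => ConcreteCategory.congr_hom sc.leftSection_bottom n)
      (fun m => (hls _).trans ((congrArg sc.rightSection (hcond m)).trans (hls _).symm)) hw hsurj hdesc hc
  let QM : LawvereModel L := ⟨colimit K', hQ⟩
  let c₀ : Cocone (parallelPair f g) :=
    { pt := QM
      ι :=
        { app := fun j => ObjectProperty.homMk (colimit.ι K' j)
          naturality := fun _ _ φ => by
            ext1
            exact (colimit.cocone K').ι.naturality φ } }
  have hc₀ : IsColimit c₀ := by
    apply isColimitOfReflects (ObjectProperty.ι _)
    exact IsColimit.ofIsoColimit (colimit.isColimit K')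
      (Cocones.ext (Iso.refl _) (by rintro (_ | _) <;> simp [c₀]))
  have hpres : IsColimit ((evalModel L X).mapCocone c₀) :=
    IsColimit.ofIsoColimit (hev X)
      (Cocones.ext (Iso.refl _) (by rintro (_ | _) <;> simp [c₀, evalModel]))
  exact createsColimitOfReflectsIso' hpres
    { liftedCocone := c₀
      validLift := Iso.refl _
      makesColimit := hc₀ }

end ModelCat

end Stmt16Aux

theorem stmt16 {L : Type v} [Category.{u} L] (X : L)
    (hpow : ∀ I : Type u, HasProduct fun _ : I => X)
    (hgen : ∀ A : L, ∃ I : Type u,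
      letI := hpow I; Nonempty (A ≅ ∏ᶜ fun _ : I => X)) :
    Nonempty (MonadicRightAdjoint (evalModel L X)) := by
  haveI : (evalModel L X).ReflectsIsomorphisms :=
    Stmt16Aux.evalModel_reflectsIsos X hpow hgen
  have adj := Adjunction.adjunctionOfEquivLeft (Stmt16Aux.freeHomEquiv X hpow)
    (fun I M M' α h => Stmt16Aux.freeHomEquiv_natural X hpow I α h)
  haveI : Monad2.CreatesColimitOfIsSplitPair (evalModel L X) :=
    ⟨fun f g _ => Stmt16Aux.createsSplit X hpow hgen f g⟩
  exact ⟨Monad2.monadicOfCreatesGSplitCoequalizers adj⟩
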